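/- For every natural number i > 0, f(2 / (3^i + 1)) = 2^(i-1) / (3^i - 2^(i-1)). -/

import Mathlib

open intervalIntegral Set

theorem bourbaki_stmt (f : ℝ → ℝ)
    (hcont : ContinuousOn f (Set.Icc 0 1))
    (h0 : f 0 = 0) (h1 : f 1 = 1)
    (hw1 : ∀ x ∈ Set.Icc (0:ℝ) 1, f (x / 3) = (2/3) * f x)
    (hw2 : ∀ x ∈ Set.Icc (0:ℝ) 1, f ((2 - x) / 3) = (1/3) * (1 + f x))
    (hw3 : ∀ x ∈ Set.Icc (0:ℝ) 1, f ((2 + x) / 3) = 1/3 + (2/3) * f x) :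
    ∀ i : ℕ, 0 < i → f (2 / (3 ^ i + 1)) = 2 ^ (i - 1) / (3 ^ i - 2 ^ (i - 1)) := by
  have haux : ∀ k : ℕ, ∀ x ∈ Set.Icc (0:ℝ) 1, f (x / 3 ^ k) = (2/3) ^ k * f x := by
    intro k
    induction k with
    | zero => intro x hx; simp
    | succ n ih =>
      intro x hx
      obtain ⟨hx0, hx1⟩ := hx
      have hx3 : x / 3 ∈ Set.Icc (0:ℝ) 1 := ⟨by linarith, by linarith⟩
      have hrw : x / 3 ^ (n + 1) = (x / 3) / 3 ^ n := by
        rw [pow_succ]; ring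
      rw [hrw, ih _ hx3, hw1 x ⟨hx0, hx1⟩]; ring
  intro i hi
  obtain ⟨j, rfl⟩ : ∃ j, i = j + 1 := ⟨i - 1, (Nat.succ_pred_eq_of_pos hi).symm⟩
  have hBp : (0:ℝ) < 3 ^ j := by positivity
  have hAp : (0:ℝ) < 2 ^ j := by positivity
  have h1B : (1:ℝ) ≤ 3 ^ j := one_le_pow₀ (by norm_num)
  have hAB : (2:ℝ) ^ j ≤ 3 ^ j := pow_le_pow_left₀ (by norm_num) (by norm_num) j
  have hS : (0:ℝ) < 3 ^ (j + 1) + 1 := by positivity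
  set y : ℝ := 2 / (3 ^ (j + 1) + 1) with hy_def
  have hSv : (3:ℝ) ^ (j+1) + 1 = 3 ^ j * 3 + 1 := by rw [pow_succ]
  have hy : y ∈ Set.Icc (0:ℝ) 1 := by
    constructor
    · positivity
    · rw [hy_def, div_le_one hS, hSv]; linarith
  set z : ℝ := 2 * 3 ^ j / (3 ^ (j + 1) + 1) with hz_def
  have hz : z ∈ Set.Icc (0:ℝ) 1 := by
    constructor
    · positivity
    · rw [hz_def, div_le_one hS, hSv]; nlinarith [hBp]
  have hzy : (2 - y) / 3 = z := by
    rw [hy_def, hz_def, hSv]; field_simp; ring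
  have hyz : z / 3 ^ j = y := by
    rw [hy_def, hz_def]; field_simp
  have e1 : f z = (1/3) * (1 + f y) := by rw [← hzy]; exact hw2 y hy
  have e2 : f y = (2/3) ^ j * f z := by rw [← hyz]; exact haux j z hz
  have key : f y = (2/3) ^ j * ((1/3) * (1 + f y)) := by
    calc f y = (2/3) ^ j * f z := e2
    _ = (2/3) ^ j * ((1/3) * (1 + f y)) := by rw [e1]
  rw [div_pow] at key
  have hden : (3:ℝ) ^ j * 3 - 2 ^ j > 0 := by nlinarith
  have hfy : f y = 2 ^ j / (3 ^ j * 3 - 2 ^ j) := by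
    rw [eq_div_iff (ne_of_gt hden)]
    field_simp at key
    linarith
  show f y = 2 ^ (j + 1 - 1) / (3 ^ (j + 1) - 2 ^ (j + 1 - 1))
  simpa [pow_succ] using hfy
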